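/- For every integer m ≥ 2, every M with 1 ≤ M ≤ 3·2^m, and every N ≥ 9·2^{m−1} + 3, there exist a positive integer r and an irredundant mixed orthogonal array IrMOA(r, M+N, 3^M2^N, 2). -/

import Mathlib

open Finset

/-- The Hamming distance between two rows of an array: the number of columns
in which the rows differ. -/
def hamDist {ι κ : Type*} [Fintype κ] (A : ι → κ → ℕ) (i i' : ι) : ℕ :=
  (Finset.univ.filter fun j => A i j ≠ A i' j).card

/-- `MD(A)`: the minimum Hamming distance over all pairs of distinct rows. -/
noncomputable def minDist {ι κ : Type*} [Fintype κ] (A : ι → κ → ℕ) : ℕ :=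
  sInf {n | ∃ i i', i ≠ i' ∧ hamDist A i i' = n}

/-- `A` is a mixed orthogonal array of strength `k` (rows indexed by `ι`,
columns by `κ`, column `j` taking values in `{0, …, lv j − 1}`): in the
subarray given by any choice of at most `k` columns, every tuple of symbols
occurs equally often as a row, namely (number of rows)/(product of the levels
of the chosen columns) times. -/
def IsMOA {ι κ : Type*} [Fintype ι] [Fintype κ] [DecidableEq κ]
    (A : ι → κ → ℕ) (lv : κ → ℕ) (k : ℕ) : Prop :=
  (∀ i j, A i j < lv j) ∧
  ∀ S : Finset κ, S.card ≤ k → ∀ x : κ → ℕ, (∀ j ∈ S, x j < lv j) →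
    (Finset.univ.filter fun i : ι => ∀ j ∈ S, A i j = x j).card * ∏ j ∈ S, lv j
      = Fintype.card ι

/-- An irredundant mixed orthogonal array of strength `k`: an MOA of strength
`k` any two distinct rows of which have Hamming distance at least `k+1`. -/
def IsIrMOA {ι κ : Type*} [Fintype ι] [Fintype κ] [DecidableEq κ]
    (A : ι → κ → ℕ) (lv : κ → ℕ) (k : ℕ) : Prop :=
  IsMOA A lv k ∧ ∀ i i' : ι, i ≠ i' → k + 1 ≤ hamDist A i i'

/-- A difference scheme `D(r, c, d)`: an `r × c` matrix over `ℤ_d` such that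
for any two distinct columns the `r` differences of corresponding entries
take each value of `ℤ_d` exactly `r/d` times. -/
def IsDiffScheme {r c d : ℕ} (B : Fin r → Fin c → ZMod d) : Prop :=
  ∀ j j' : Fin c, j ≠ j' → ∀ g : ZMod d,
    (Finset.univ.filter fun i : Fin r => B i j - B i j' = g).card * d = r

namespace S5
open Function

variable {R : Type*} [CommRing R]

def dot {t : ℕ} (x y : Fin t → R) : R := ∑ i, x i * y i

lemma dot_delta {t : ℕ} (c : R) (b : Fin t) (u : Fin t → R) :
    dot (fun i => if i = b then c else 0) u = c * u b := by
  simp [dot, Finset.sum_ite_eq' Finset.univ b (fun i => c * u i)]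

lemma dot_sub_left {t : ℕ} (x x' y : Fin t → R) :
    dot (fun i => x i - x' i) y = dot x y - dot x' y := by
  simp [dot, sub_mul, Finset.sum_sub_distrib]

lemma dot_cons {t : ℕ} (x : Fin (t+1) → R) (h : R) (v : Fin t → R) :
    dot x (Fin.cons h v) = x 0 * h + dot (fun i => x i.succ) v := by
  rw [dot, Fin.sum_univ_succ]
  simp [dot]

lemma dot_comm {t : ℕ} (x y : Fin t → R) : dot x y = dot y x := by
  simp [dot, mul_comm]

lemma dot_zero_left {t : ℕ} (y : Fin t → R) :
    dot (0 : Fin t → R) y = 0 := by simp [dot]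

lemma dot_zero_left' {t : ℕ} (y : Fin t → R) :
    dot (fun _ => (0:R)) y = 0 := by simp [dot]

def dotHom {t : ℕ} (u : Fin t → R) : (Fin t → R) →+ R :=
  AddMonoidHom.mk' (fun x => dot x u)
    (by intro a b; simp [dot, add_mul, Finset.sum_add_distrib])

@[simp] lemma dotHom_apply {t : ℕ} (u x : Fin t → R) :
    dotHom u x = dot x u := rfl

lemma dot_add_left {t : ℕ} (x x' y : Fin t → R) :
    dot (fun i => x i + x' i) y = dot x y + dot x' y := by
  simp [dot, add_mul, Finset.sum_add_distrib]

lemma surj_single {t : ℕ} (u : Fin t → R) (b : Fin t) (hb : IsUnit (u b)) :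
    Surjective (fun x : Fin t → R => dot x u) := by
  obtain ⟨v, hv⟩ := hb.exists_right_inv
  intro y
  refine ⟨fun i => if i = b then y * v else 0, ?_⟩
  simp only [dot_delta]
  calc y * v * u b = y * (u b * v) := by ring
  _ = y := by rw [hv, mul_one]

lemma surj_pair [Nontrivial R] {t : ℕ} (u u' : Fin t → R) (b b' : Fin t)
    (h : IsUnit (u b * u' b' - u b' * u' b)) :
    Surjective (fun x : Fin t → R => (dot x u, dot x u')) := by
  obtain ⟨d, hd⟩ := h.exists_right_inv
  rintro ⟨y1, y2⟩
  refine ⟨fun i => (if i = b then (y1 * u' b' - y2 * u b') * d else 0)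
      + (if i = b' then (y2 * u b - y1 * u' b) * d else 0), ?_⟩
  have e1 : ∀ w : Fin t → R, dot (fun i =>
      (if i = b then (y1 * u' b' - y2 * u b') * d else 0)
      + (if i = b' then (y2 * u b - y1 * u' b) * d else 0)) w
      = (y1 * u' b' - y2 * u b') * d * w b + (y2 * u b - y1 * u' b) * d * w b' := by
    intro w; rw [dot_add_left, dot_delta, dot_delta]
  refine Prod.ext ?_ ?_ <;> simp only [e1]
  · calc (y1 * u' b' - y2 * u b') * d * u b + (y2 * u b - y1 * u' b) * d * u b'
        = y1 * ((u b * u' b' - u b' * u' b) * d) := by ring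
    _ = y1 := by rw [hd, mul_one]
  · calc (y1 * u' b' - y2 * u b') * d * u' b + (y2 * u b - y1 * u' b) * d * u' b'
        = y2 * ((u b * u' b' - u b' * u' b) * d) := by ring
    _ = y2 := by rw [hd, mul_one]

lemma card_fiber_mul {G H : Type*} [AddCommGroup G] [AddCommGroup H]
    [Fintype G] [Fintype H] [DecidableEq G] [DecidableEq H]
    (f : G →+ H) (hf : Surjective f) (y : H) :
    (univ.filter fun g => f g = y).card * Fintype.card H = Fintype.card G := by
  have key : ∀ y1 y2 : H, (univ.filter fun g => f g = y1).card
      = (univ.filter fun g => f g = y2).card := by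
    intro y1 y2
    obtain ⟨d, hd⟩ := hf (y2 - y1)
    apply Finset.card_bij (fun g _ => g + d)
    · intro a ha
      simp only [Finset.mem_filter, Finset.mem_univ, true_and] at ha ⊢
      rw [map_add, ha, hd]; abel
    · intro a _ b _ hab; exact add_right_cancel hab
    · intro c hc
      simp only [Finset.mem_filter, Finset.mem_univ, true_and] at hc
      refine ⟨c - d, ?_, by abel⟩
      simp only [Finset.mem_filter, Finset.mem_univ, true_and, map_sub, hc, hd]
      abel
  have h2 : Fintype.card G = ∑ z : H, (univ.filter fun g => f g = z).card := by
    rw [← Finset.card_univ, Finset.card_eq_sum_card_fiberwise (f := f)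
      (t := univ) (by simp)]
  rw [h2, Finset.sum_congr rfl (fun z _ => key z y), Finset.sum_const,
    Finset.card_univ, smul_eq_mul, mul_comm]

lemma z2_ne_zero (z : ZMod 2) (h : z ≠ 0) : z = 1 := by revert z h; decide

lemma z3_unit (z : ZMod 3) (h : z ≠ 0) : IsUnit z := by revert z h; decide

lemma z2_unit (z : ZMod 2) (h : z ≠ 0) : IsUnit z := by revert z h; decide

lemma fun_ne_iff {α β : Type*} (f g : α → β) : f ≠ g ↔ ∃ a, f a ≠ g a := by
  constructor
  · intro h; by_contra hc; push_neg at hc; exact h (funext hc)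
  · rintro ⟨a, ha⟩ rfl; exact ha rfl

lemma three_le_card {α : Type*} [DecidableEq α] {s : Finset α} (a b c : α)
    (ha : a ∈ s) (hb : b ∈ s) (hc : c ∈ s) (hab : a ≠ b) (hac : a ≠ c)
    (hbc : b ≠ c) : 3 ≤ s.card := by
  have hsub : ({a, b, c} : Finset α) ⊆ s := by
    intro x hx; simp only [Finset.mem_insert, Finset.mem_singleton] at hx
    rcases hx with rfl | rfl | rfl <;> assumption
  have h3 : ({a, b, c} : Finset α).card = 3 := by
    rw [Finset.card_insert_of_notMem (by simp [hab, hac]),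
      Finset.card_insert_of_notMem (by simp [hbc]), Finset.card_singleton]
  rw [← h3]; exact Finset.card_le_card hsub

lemma two_le_card {α : Type*} [DecidableEq α] {s : Finset α} (a b : α)
    (ha : a ∈ s) (hb : b ∈ s) (hab : a ≠ b) : 2 ≤ s.card :=
  Finset.one_lt_card.mpr ⟨a, ha, b, hb, hab⟩

lemma one_le_card {α : Type*} {s : Finset α} (a : α) (ha : a ∈ s) :
    1 ≤ s.card := Finset.card_pos.mpr ⟨a, ha⟩

lemma zmod2_pair_minor {t : ℕ} (c c' : Fin t → ZMod 2) (hne : c ≠ c')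
    (h0 : c ≠ 0) (h0' : c' ≠ 0) :
    ∃ b b', (c b * c' b' - c b' * c' b) ≠ 0 := by
  obtain ⟨b, hb⟩ := (fun_ne_iff c c').mp hne
  by_cases h1 : c b = 1
  · have h2 : c' b = 0 := by
      rcases (by decide : ∀ z : ZMod 2, z = 0 ∨ z = 1) (c' b) with h | h
      · exact h
      · exact absurd (h1.trans h.symm) hb
    obtain ⟨b2, hb2⟩ := (fun_ne_iff c' 0).mp h0'
    have hb2' : c' b2 = 1 := z2_ne_zero _ (by simpa using hb2)
    exact ⟨b, b2, by rw [h1, hb2', h2]; simp⟩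
  · have h1' : c b = 0 := by
      rcases (by decide : ∀ z : ZMod 2, z = 0 ∨ z = 1) (c b) with h | h
      · exact h
      · exact absurd h h1
    have h2 : c' b = 1 := by
      rcases (by decide : ∀ z : ZMod 2, z = 0 ∨ z = 1) (c' b) with h | h
      · exact absurd (h1'.trans h.symm) hb
      · exact h
    obtain ⟨b1, hb1⟩ := (fun_ne_iff c 0).mp h0
    have hb1' : c b1 = 1 := z2_ne_zero _ (by simpa using hb1)
    refine ⟨b1, b, ?_⟩
    rw [hb1', h2, h1']
    simp

def pairHom {t : ℕ} (u u' : Fin t → R) : (Fin t → R) →+ R × R :=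
  AddMonoidHom.mk' (fun x => (dot x u, dot x u'))
    (by intro a b; simp [dot, add_mul, Finset.sum_add_distrib, Prod.ext_iff])

@[simp] lemma pairHom_apply {t : ℕ} (u u' x : Fin t → R) :
    pairHom u u' x = (dot x u, dot x u') := rfl

lemma card_filter_prod {α β : Type*} [Fintype α] [Fintype β] [DecidableEq α]
    (P : α × β → Prop) [DecidablePred P] :
    (univ.filter P).card = ∑ a : α, (univ.filter fun b => P (a, b)).card := by
  rw [Finset.card_eq_sum_card_fiberwise (f := Prod.fst) (t := univ) (by simp)]
  refine Finset.sum_congr rfl fun a _ => ?_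
  apply Finset.card_bij (fun p _ => p.2)
  · intro p hp
    simp only [Finset.mem_filter, Finset.mem_univ, true_and] at hp ⊢
    obtain ⟨h1, h2⟩ := hp
    rwa [show (a, p.2) = p from Prod.ext h2.symm rfl]
  · intro p hp q hq hpq
    simp only [Finset.mem_filter, Finset.mem_univ, true_and] at hp hq
    exact Prod.ext (hp.2.trans hq.2.symm) hpq
  · intro b hb
    simp only [Finset.mem_filter, Finset.mem_univ, true_and] at hb ⊢
    exact ⟨(a, b), ⟨hb, rfl⟩, rfl⟩

lemma card_sum_filter_ge {α β : Type*} [Fintype α] [Fintype β]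
    (P : α ⊕ β → Prop) [DecidablePred P] (a b : ℕ)
    (ha : a ≤ (univ.filter fun i : α => P (Sum.inl i)).card)
    (hb : b ≤ (univ.filter fun i : β => P (Sum.inr i)).card) :
    a + b ≤ (univ.filter P).card := by
  classical
  set s1 := (univ.filter fun i : α => P (Sum.inl i)).map
    ⟨Sum.inl, Sum.inl_injective⟩ with hs1
  set s2 := (univ.filter fun i : β => P (Sum.inr i)).map
    ⟨Sum.inr, Sum.inr_injective⟩ with hs2
  have hdisj : Disjoint s1 s2 := by
    simp only [Finset.disjoint_left, hs1, hs2, Finset.mem_map, Finset.mem_filter]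
    rintro x ⟨i, _, rfl⟩ ⟨j, _, h⟩
    exact Sum.inl_ne_inr h.symm
  have hsub : s1 ∪ s2 ⊆ univ.filter P := by
    intro x hx
    simp only [Finset.mem_union, hs1, hs2, Finset.mem_map, Finset.mem_filter,
      Finset.mem_univ, true_and, Function.Embedding.coeFn_mk] at hx
    simp only [Finset.mem_filter, Finset.mem_univ, true_and]
    rcases hx with ⟨i, hi, rfl⟩ | ⟨j, hj, rfl⟩ <;> assumption
  calc a + b ≤ s1.card + s2.card := by
        simp only [hs1, hs2, Finset.card_map]; omega
  _ = (s1 ∪ s2).card := (Finset.card_union_of_disjoint hdisj).symm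
  _ ≤ _ := Finset.card_le_card hsub

lemma val_eq_iff {n : ℕ} [NeZero n] (z : ZMod n) (m : ℕ) (hm : m < n) :
    z.val = m ↔ z = (m : ZMod n) := by
  constructor
  · intro h
    apply ZMod.val_injective
    rw [h, ZMod.val_cast_of_lt hm]
  · intro h; rw [h, ZMod.val_cast_of_lt hm]

lemma val_ne_iff {n : ℕ} [NeZero n] (z z' : ZMod n) :
    z.val ≠ z'.val ↔ z ≠ z' :=
  not_congr ⟨fun h => ZMod.val_injective n h, fun h => by rw [h]⟩

structure TernData (M : ℕ) where
  t : ℕ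
  u : Fin M → Fin t → ZMod 3
  pr : (Fin t → ZMod 3) → ZMod 3
  et : (Fin t → ZMod 3) → ZMod 3
  hsingle : ∀ j, ∃ b, u j b ≠ 0
  hpair : ∀ j j', j ≠ j' → ∃ b b', (u j b * u j' b' - u j b' * u j' b) ≠ 0
  hdist : ∀ x x' : Fin t → ZMod 3, x ≠ x' →
    (pr x ≠ pr x' ∧ 1 ≤ (univ.filter fun j => dot x (u j) ≠ dot x' (u j)).card) ∨
    (et x ≠ et x' ∧ 2 ≤ (univ.filter fun j => dot x (u j) ≠ dot x' (u j)).card) ∨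
    3 ≤ (univ.filter fun j => dot x (u j) ≠ dot x' (u j)).card

def td1 : TernData 1 where
  t := 1
  u := ![![1]]
  pr := fun x => x 0
  et := fun _ => 0
  hsingle := by decide
  hpair := by decide
  hdist := by decide

def td2 : TernData 2 where
  t := 2
  u := ![![1,0], ![0,1]]
  pr := fun x => x 0 - x 1
  et := fun x => x 0
  hsingle := by decide
  hpair := by decide
  hdist := by decide

def td3 : TernData 3 where
  t := 2
  u := ![![1,0], ![0,1], ![1,1]]
  pr := fun x => x 0 - x 1
  et := fun _ => 0
  hsingle := by decide
  hpair := by decide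
  hdist := by decide

def td4 : TernData 4 where
  t := 3
  u := ![![1,0,0], ![0,1,0], ![1,1,1], ![1,2,1]]
  pr := fun x => 2 * x 0 + x 2
  et := fun _ => 0
  hsingle := by decide
  hpair := by decide
  hdist := by decide

def td5 : TernData 5 where
  t := 3
  u := ![![1,0,0], ![0,1,0], ![0,0,1], ![1,1,1], ![1,1,2]]
  pr := fun x => x 0
  et := fun _ => 0
  hsingle := by decide
  hpair := by decide
  hdist := by decide

lemma tern_big (M : ℕ) (hM : 6 ≤ M) : Nonempty (TernData M) := by
  classical
  set k := Nat.log 3 (M - 3) + 1 with hkdef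
  have hk2 : 2 ≤ k := by
    have : 1 ≤ Nat.log 3 (M - 3) :=
      (Nat.le_log_iff_pow_le (by norm_num) (by omega)).mpr (by omega)
    omega
  have hlow : 3 ^ (k - 1) ≤ M - 3 := by
    have := Nat.pow_log_le_self 3 (show M - 3 ≠ 0 by omega)
    simpa [hkdef] using this
  have hhigh : M - 3 < 3 ^ k := by
    have := Nat.lt_pow_succ_log_self (by norm_num : 1 < 3) (M - 3)
    simpa [hkdef] using this
  have h3k : 3 ^ k = 3 * 3 ^ (k - 1) := by
    conv_lhs => rw [show k = (k-1) + 1 by omega]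
    rw [pow_succ, mul_comm]
  have h3k1 : 3 ≤ 3 ^ (k - 1) := by
    calc (3:ℕ) = 3 ^ 1 := by norm_num
    _ ≤ 3 ^ (k-1) := Nat.pow_le_pow_right (by norm_num) (by omega)
  have hcard : Fintype.card (Fin k → ZMod 3) = 3 ^ k := by
    simp [ZMod.card]
  let E3 : Fin (3 ^ k) → (Fin k → ZMod 3) := (Fintype.equivFinOfCardEq hcard).symm
  have hE3inj : Function.Injective E3 := (Fintype.equivFinOfCardEq hcard).symm.injective
  let eb : ℕ → Fin k → ZMod 3 := fun m i => if (i : ℕ) = m then 1 else 0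
  let uu : Fin M → Fin (k+1) → ZMod 3 := fun j =>
    if h : (j : ℕ) < 3 ^ k then Fin.cons 1 (E3 ⟨j, h⟩)
    else Fin.cons 0 (eb ((j : ℕ) - 3 ^ k))
  have hext : ∀ j : Fin M, ¬ ((j:ℕ) < 3^k) → (j:ℕ) - 3^k < k := by
    intro j hj
    have := j.isLt
    omega
  refine ⟨{ t := k + 1, u := uu, pr := fun _ => 0, et := fun _ => 0,
            hsingle := ?_, hpair := ?_, hdist := ?_ }⟩
  · intro j
    by_cases h : (j : ℕ) < 3 ^ k
    · exact ⟨0, by simp [uu, h]⟩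
    · refine ⟨(⟨(j:ℕ) - 3^k, hext j h⟩ : Fin k).succ, ?_⟩
      have huj : uu j = Fin.cons 0 (eb ((j:ℕ) - 3^k)) := by simp [uu, h]
      rw [huj, Fin.cons_succ]
      simp [eb]
  · intro j j' hjj'
    by_cases h : (j : ℕ) < 3 ^ k <;> by_cases h' : (j' : ℕ) < 3 ^ k
    · -- both affine
      have hne : E3 ⟨j, h⟩ ≠ E3 ⟨j', h'⟩ := by
        intro hc
        exact hjj' (Fin.ext (by simpa using congrArg Fin.val (hE3inj hc)))
      obtain ⟨i, hi⟩ := (fun_ne_iff _ _).mp hne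
      refine ⟨0, i.succ, ?_⟩
      simp only [uu, dif_pos h, dif_pos h', Fin.cons_zero, Fin.cons_succ]
      rw [one_mul, mul_one]
      exact sub_ne_zero.mpr hi.symm
    · -- j affine, j' extra
      refine ⟨(⟨(j':ℕ) - 3^k, hext j' h'⟩ : Fin k).succ, 0, ?_⟩
      simp only [uu, dif_pos h, dif_neg h', Fin.cons_succ, Fin.cons_zero, eb]
      simp
    · -- j extra, j' affine
      refine ⟨0, (⟨(j:ℕ) - 3^k, hext j h⟩ : Fin k).succ, ?_⟩
      simp only [uu, dif_neg h, dif_pos h', Fin.cons_succ, Fin.cons_zero, eb]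
      simp
    · -- both extra
      have hmm : (j:ℕ) - 3^k ≠ (j':ℕ) - 3^k := by
        have := j.isLt; have := j'.isLt
        intro hc
        exact hjj' (Fin.ext (by omega))
      refine ⟨(⟨(j:ℕ) - 3^k, hext j h⟩ : Fin k).succ,
              (⟨(j':ℕ) - 3^k, hext j' h'⟩ : Fin k).succ, ?_⟩
      simp only [uu, dif_neg h, dif_neg h', Fin.cons_succ, eb]
      simp [hmm, Ne.symm hmm]
  · intro x x' hxx'
    right; right
    set z : Fin (k+1) → ZMod 3 := fun i => x i - x' i with hz
    have hzne : ∃ i, z i ≠ 0 := by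
      obtain ⟨i, hi⟩ := (fun_ne_iff x x').mp hxx'
      exact ⟨i, sub_ne_zero.mpr hi⟩
    have hfc : ∀ j, (dot x (uu j) ≠ dot x' (uu j)) ↔ dot z (uu j) ≠ 0 := by
      intro j
      rw [hz, dot_sub_left]
      constructor
      · intro h; exact sub_ne_zero.mpr h
      · intro h hc; exact h (by rw [hc, sub_self])
    set ztl : Fin k → ZMod 3 := fun i => z i.succ with hztl
    have hdotA : ∀ (j : Fin M) (h : (j:ℕ) < 3^k),
        dot z (uu j) = z 0 + dot ztl (E3 ⟨j, h⟩) := by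
      intro j h
      simp only [uu, dif_pos h]
      rw [dot_cons, mul_one]
    by_cases hztl0 : ztl = 0
    · -- tail zero, z 0 ≠ 0, all affine columns differ
      have hz00 : z 0 ≠ 0 := by
        obtain ⟨i, hi⟩ := hzne
        rcases Fin.eq_zero_or_eq_succ i with rfl | ⟨i0, rfl⟩
        · exact hi
        · have := congrFun hztl0 i0
          simp only [Pi.zero_apply] at this
          exact absurd this hi
      have hallA : ∀ (j : Fin M), (j:ℕ) < 3^k → dot z (uu j) ≠ 0 := by
        intro j h
        rw [hdotA j h, hztl0, dot_zero_left, add_zero]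
        exact hz00
      have h9 : 9 ≤ 3 ^ k := by omega
      have hmem : ∀ (m : ℕ) (hm : m < M) (hm2 : m < 3^k),
          (⟨m, hm⟩ : Fin M) ∈ univ.filter
            (fun j => dot x (uu j) ≠ dot x' (uu j)) := by
        intro m hm hm2
        simp only [mem_filter, mem_univ, true_and]
        exact (hfc _).mpr (hallA _ hm2)
      refine three_le_card (⟨0, by omega⟩ : Fin M) ⟨1, by omega⟩ ⟨2, by omega⟩
        (hmem 0 (by omega) (by omega)) (hmem 1 (by omega) (by omega))
        (hmem 2 (by omega) (by omega)) ?_ ?_ ?_ <;>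
        simp [Fin.ext_iff]
    · -- tail nonzero: counting over affine columns
      obtain ⟨b, hb0⟩ := (fun_ne_iff ztl 0).mp hztl0
      have hb : ztl b ≠ 0 := by simpa using hb0
      set FB := univ.filter (fun v : Fin k → ZMod 3 => dot v ztl = - z 0) with hFB
      have hsurj : Surjective (fun v : Fin k → ZMod 3 => dot v ztl) :=
        surj_single ztl b (z3_unit _ hb)
      have hFBcard : FB.card * 3 = 3 ^ k := by
        have hc := card_fiber_mul (dotHom ztl) hsurj (- z 0)
        simp [hcard, ZMod.card] at hc; rw [hFB]; exact hc
      have hFBc : FB.card = 3 ^ (k-1) := by omega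
      set P := univ.filter (fun j : Fin M => (j:ℕ) < 3^k) with hP
      have hPcard : min M (3^k) ≤ P.card := by
        have := Finset.card_le_card_of_injOn
          (f := fun i : Fin (min M (3^k)) =>
            (⟨(i:ℕ), lt_of_lt_of_le i.isLt (min_le_left _ _)⟩ : Fin M))
          (s := univ) (t := P) ?_ ?_
        · simpa using this
        · intro i _
          simp only [hP, Finset.mem_coe, mem_filter, mem_univ, true_and]
          exact lt_of_lt_of_le i.isLt (min_le_right _ _)
        · intro i _ i' _ hii'
          exact Fin.ext (by simpa using congrArg Fin.val hii')
      set O := P.filter (fun j => dot z (uu j) = 0) with hO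
      have hOcard : O.card ≤ 3 ^ (k-1) := by
        rw [← hFBc]
        refine Finset.card_le_card_of_injOn
          (f := fun j : Fin M => if h : (j:ℕ) < 3^k then E3 ⟨(j:ℕ), h⟩ else 0)
          ?_ ?_
        · intro j hj
          simp only [hO, hP, Finset.mem_coe, mem_filter, mem_univ, true_and] at hj
          obtain ⟨h1, h2⟩ := hj
          rw [hdotA j h1] at h2
          simp only [dif_pos h1, hFB, Finset.mem_coe, mem_filter, mem_univ, true_and]
          rw [dot_comm]
          exact eq_neg_of_add_eq_zero_right h2
        · intro j hj j' hj' heq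
          have hj1 := Finset.mem_coe.mp hj
          have hj'1 := Finset.mem_coe.mp hj'
          simp only [hO, hP, mem_filter, mem_univ, true_and] at hj1 hj'1
          simp only [dif_pos hj1.1, dif_pos hj'1.1] at heq
          exact Fin.ext (by simpa using congrArg Fin.val (hE3inj heq))
      set G := P.filter (fun j => ¬ (dot z (uu j) = 0)) with hG
      have hsplit : O.card + G.card = P.card :=
        Finset.card_filter_add_card_filter_not _
      have hGsub : G ⊆ univ.filter (fun j => dot x (uu j) ≠ dot x' (uu j)) := by
        intro j hj
        simp only [hG, hP, mem_filter, mem_univ, true_and] at hj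
        simp only [mem_filter, mem_univ, true_and]
        exact (hfc j).mpr hj.2
      have hPle : P.card ≤ M := by
        calc P.card ≤ (univ : Finset (Fin M)).card := Finset.card_le_card (by simp [hP])
        _ = M := by simp
      have := Finset.card_le_card hGsub
      omega

/-! ## Binary data -/

def EE : ZMod 3 → ℕ → ZMod 2 := fun a j =>
  if a = 1 then (if j ≤ 1 then 1 else 0)
  else if a = 2 then (if 1 ≤ j ∧ j ≤ 2 then 1 else 0) else 0

def E2p : ZMod 3 → ℕ → ZMod 2 := fun a j =>
  if a = 1 then (if j = 0 then 1 else 0)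
  else if a = 2 then (if j = 1 then 1 else 0) else 0

lemma EE_inj : ∀ a b : ZMod 3, a ≠ b → ∃ j : Fin 3, EE a (j:ℕ) ≠ EE b (j:ℕ) := by
  decide

lemma EE_share : ∀ a b : ZMod 3, ∃ j : Fin 3, EE a (j:ℕ) = EE b (j:ℕ) := by
  decide

lemma E2p_inj : ∀ a b : ZMod 3, a ≠ b → ∃ j : Fin 2, E2p a (j:ℕ) ≠ E2p b (j:ℕ) := by
  decide

def off (pv hv : ZMod 3) (c : ℕ) : ZMod 2 :=
  if c < 2 then E2p hv c else if c < 8 then EE pv ((c - 2) / 2) else 0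

def pat : Fin 10 → Fin 4 → ZMod 2 :=
  ![![0,0,0,0], ![1,0,0,0], ![0,1,0,0], ![1,1,0,0], ![0,0,1,0],
    ![1,0,1,0], ![0,0,0,1], ![1,0,0,1], ![0,1,1,0], ![1,1,1,0]]

lemma pat_inj : ∀ s s' : Fin 10, s ≠ s' → ∃ n : Fin 4, pat s n ≠ pat s' n := by
  decide

structure BinData (N : ℕ) where
  D : ℕ
  hD : 3 ≤ D
  xe : ℕ
  hxe : xe ≤ 2
  nf : ℕ
  hnf : 2 ^ D + 2 ≤ nf
  hN : N = 8 + xe + nf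
  F : Fin nf ↪ (Fin (D+1) → ZMod 2)
  hF0 : ∀ i, F i ≠ 0

lemma bin_exists (N : ℕ) (hN : 21 ≤ N) : Nonempty (BinData N) := by
  classical
  set D := Nat.log 2 (N - 10) with hDdef
  have hD3 : 3 ≤ D := by
    have : 3 ≤ Nat.log 2 (N - 10) :=
      (Nat.le_log_iff_pow_le (by norm_num) (by omega)).mpr (by omega)
    omega
  have hlow : 2 ^ D ≤ N - 10 := Nat.pow_log_le_self 2 (by omega)
  have hhigh : N - 10 < 2 ^ (D + 1) :=
    Nat.lt_pow_succ_log_self (by norm_num) (N - 10)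
  have h2D : 2 ^ (D+1) = 2 * 2 ^ D := by rw [pow_succ]; ring
  have h8 : 8 ≤ 2 ^ D := by
    calc (8:ℕ) = 2 ^ 3 := by norm_num
    _ ≤ 2 ^ D := Nat.pow_le_pow_right (by norm_num) hD3
  set nf := min (N - 8) (2 ^ (D+1) - 1) with hnfdef
  set xe := N - 8 - nf with hxedef
  have hcards : nf ≤ Fintype.card {v : Fin (D+1) → ZMod 2 // v ≠ 0} := by
    have hc1 : Fintype.card {v : Fin (D+1) → ZMod 2 // v ≠ 0}
        = 2 ^ (D+1) - 1 := by
      rw [Fintype.card_subtype_compl, Fintype.card_subtype_eq]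
      simp [ZMod.card]
    rw [hc1]
    omega
  obtain ⟨F0⟩ : Nonempty (Fin nf ↪ {v : Fin (D+1) → ZMod 2 // v ≠ 0}) := by
    apply Function.Embedding.nonempty_of_card_le
    simpa using hcards
  refine ⟨{ D := D, hD := hD3, xe := xe, hxe := by omega, nf := nf,
            hnf := by omega, hN := by omega,
            F := ⟨fun i => (F0 i).1, fun i i' h => F0.injective (Subtype.ext h)⟩,
            hF0 := fun i => (F0 i).2 }⟩

def bg {N : ℕ} (bd : BinData N) (c : Fin N) : Fin (bd.D + 2) → ZMod 2 :=
  if h : (c : ℕ) < 8 + bd.xe then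
    Fin.cons 1 (fun i => if h4 : (i:ℕ) < 4 then
      pat ⟨(c:ℕ), by have := bd.hxe; omega⟩ ⟨(i:ℕ), h4⟩ else 0)
  else
    Fin.cons 0 (bd.F ⟨(c:ℕ) - (8 + bd.xe), by
      have h1 := bd.hN; have h2 := c.isLt; omega⟩)

def bval {N : ℕ} (bd : BinData N) (pv hv : ZMod 3)
    (w : Fin (bd.D+2) → ZMod 2) (c : Fin N) : ZMod 2 :=
  dot w (bg bd c) + off pv hv (c:ℕ)

lemma bg_unit {N : ℕ} (bd : BinData N) (c : Fin N) :
    ∃ b, bg bd c b ≠ 0 := by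
  by_cases h : (c : ℕ) < 8 + bd.xe
  · exact ⟨0, by simp [bg, h]⟩
  · obtain ⟨i0, hi0⟩ := (fun_ne_iff _ _).mp
      (bd.hF0 ⟨(c:ℕ) - (8 + bd.xe), by have h1 := bd.hN; have h2 := c.isLt; omega⟩)
    refine ⟨i0.succ, ?_⟩
    have hbg : bg bd c = Fin.cons 0 (bd.F ⟨(c:ℕ) - (8 + bd.xe), by
      have h1 := bd.hN; have h2 := c.isLt; omega⟩) := by simp [bg, h]
    rw [hbg, Fin.cons_succ]
    simpa using hi0

lemma bg_ne_zero {N : ℕ} (bd : BinData N) (c : Fin N) : bg bd c ≠ 0 := by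
  obtain ⟨b, hb⟩ := bg_unit bd c
  exact (fun_ne_iff _ _).mpr ⟨b, by simpa using hb⟩

lemma bg_inj {N : ℕ} (bd : BinData N) (c c' : Fin N) (h : c ≠ c') :
    bg bd c ≠ bg bd c' := by
  have hcc : (c : ℕ) ≠ (c' : ℕ) := fun hc => h (Fin.ext hc)
  by_cases h1 : (c : ℕ) < 8 + bd.xe <;> by_cases h2 : (c' : ℕ) < 8 + bd.xe
  · -- both structural
    have hpne : (⟨(c:ℕ), by have := bd.hxe; omega⟩ : Fin 10)
        ≠ ⟨(c':ℕ), by have := bd.hxe; omega⟩ := by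
      intro hc; exact hcc (by simpa using congrArg Fin.val hc)
    obtain ⟨n, hn⟩ := pat_inj _ _ hpne
    apply (fun_ne_iff _ _).mpr
    refine ⟨(⟨(n:ℕ), by have := n.isLt; have := bd.hD; omega⟩ : Fin (bd.D+1)).succ, ?_⟩
    have e1 : bg bd c = Fin.cons 1 (fun i => if h4 : (i:ℕ) < 4 then
        pat ⟨(c:ℕ), by have := bd.hxe; omega⟩ ⟨(i:ℕ), h4⟩ else 0) := by simp [bg, h1]
    have e2 : bg bd c' = Fin.cons 1 (fun i => if h4 : (i:ℕ) < 4 then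
        pat ⟨(c':ℕ), by have := bd.hxe; omega⟩ ⟨(i:ℕ), h4⟩ else 0) := by simp [bg, h2]
    rw [e1, e2, Fin.cons_succ, Fin.cons_succ]
    have h4 : ((⟨(n:ℕ), by have := n.isLt; have := bd.hD; omega⟩ : Fin (bd.D+1)) : ℕ) < 4 :=
      n.isLt
    rw [dif_pos h4, dif_pos h4]
    simpa [Fin.eta] using hn
  · apply (fun_ne_iff _ _).mpr
    refine ⟨0, ?_⟩
    have e1 : bg bd c 0 = 1 := by simp [bg, h1]
    have e2 : bg bd c' 0 = 0 := by simp [bg, h2]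
    rw [e1, e2]; norm_num
  · apply (fun_ne_iff _ _).mpr
    refine ⟨0, ?_⟩
    have e1 : bg bd c 0 = 0 := by simp [bg, h1]
    have e2 : bg bd c' 0 = 1 := by simp [bg, h2]
    rw [e1, e2]; norm_num
  · -- both filler
    have hidx : (⟨(c:ℕ) - (8 + bd.xe), by have := bd.hN; have := c.isLt; omega⟩ :
        Fin bd.nf) ≠ ⟨(c':ℕ) - (8 + bd.xe), by have := bd.hN; have := c'.isLt; omega⟩ := by
      intro hc
      have := congrArg Fin.val hc
      simp only at this
      omega
    have hFne : bd.F _ ≠ bd.F _ := fun hc => hidx (bd.F.injective hc)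
    obtain ⟨i0, hi0⟩ := (fun_ne_iff _ _).mp hFne
    apply (fun_ne_iff _ _).mpr
    refine ⟨i0.succ, ?_⟩
    have e1 : bg bd c = Fin.cons 0 (bd.F ⟨(c:ℕ) - (8 + bd.xe), by
      have := bd.hN; have := c.isLt; omega⟩) := by simp [bg, h1]
    have e2 : bg bd c' = Fin.cons 0 (bd.F ⟨(c':ℕ) - (8 + bd.xe), by
      have := bd.hN; have := c'.isLt; omega⟩) := by simp [bg, h2]
    rw [e1, e2, Fin.cons_succ, Fin.cons_succ]
    exact hi0

lemma bg_pair_surj {N : ℕ} (bd : BinData N) (c c' : Fin N) (h : c ≠ c') :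
    Surjective (fun w : Fin (bd.D+2) → ZMod 2 => (dot w (bg bd c), dot w (bg bd c'))) := by
  obtain ⟨b, b', hbb⟩ := zmod2_pair_minor (bg bd c) (bg bd c')
    (bg_inj bd c c' h) (bg_ne_zero bd c) (bg_ne_zero bd c')
  exact surj_pair _ _ b b' (z2_unit _ hbb)

lemma bg_single_surj {N : ℕ} (bd : BinData N) (c : Fin N) :
    Surjective (fun w : Fin (bd.D+2) → ZMod 2 => dot w (bg bd c)) := by
  obtain ⟨b, hb⟩ := bg_unit bd c
  exact surj_single _ b (z2_unit _ hb)

lemma bval_ne_iff {N : ℕ} (bd : BinData N) (pv pv' hv hv' : ZMod 3)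
    (w w' : Fin (bd.D+2) → ZMod 2) (c : Fin N) :
    (bval bd pv hv w c ≠ bval bd pv' hv' w' c) ↔
      dot (fun i => w i - w' i) (bg bd c)
        + (off pv hv (c:ℕ) - off pv' hv' (c:ℕ)) ≠ 0 := by
  rw [bval, bval, dot_sub_left]
  constructor
  · intro hne h0
    exact hne (by linear_combination h0)
  · intro hne h0
    exact hne (by linear_combination h0)

lemma off_ge8 (pv hv : ZMod 3) (c : ℕ) (h : 8 ≤ c) : off pv hv c = 0 := by
  rw [off, if_neg (by omega), if_neg (by omega)]

lemma off_pay (pv hv : ZMod 3) (j : Fin 3) (σ : ℕ) (hσ : σ ≤ 1) :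
    off pv hv (2 + 2*(j:ℕ) + σ) = EE pv (j:ℕ) := by
  have hj := j.isLt
  rw [off, if_neg (by omega), if_pos (by omega)]
  congr 1
  omega

lemma off_eta (pv hv : ZMod 3) (j : Fin 2) :
    off pv hv (j:ℕ) = E2p hv (j:ℕ) := by
  have hj := j.isLt
  rw [off, if_pos (by omega)]

lemma struct_dot {N : ℕ} (bd : BinData N) (c : Fin N) (h : (c:ℕ) < 8 + bd.xe)
    (dw : Fin (bd.D+2) → ZMod 2)
    (htl0 : (fun i : Fin (bd.D+1) => dw i.succ) = 0) :
    dot dw (bg bd c) = dw 0 := by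
  have e1 : bg bd c = Fin.cons 1 (fun i => if h4 : (i:ℕ) < 4 then
      pat ⟨(c:ℕ), by have := bd.hxe; omega⟩ ⟨(i:ℕ), h4⟩ else 0) := by simp [bg, h]
  rw [e1, dot_cons, htl0, dot_zero_left, mul_one, add_zero]

lemma filler_dot {N : ℕ} (bd : BinData N) (c : Fin N) (h : ¬ (c:ℕ) < 8 + bd.xe)
    (dw : Fin (bd.D+2) → ZMod 2) :
    dot dw (bg bd c) = dot (fun i => dw i.succ)
      (bd.F ⟨(c:ℕ) - (8 + bd.xe), by have := bd.hN; have := c.isLt; omega⟩) := by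
  have e1 : bg bd c = Fin.cons 0 (bd.F ⟨(c:ℕ) - (8 + bd.xe), by
      have := bd.hN; have := c.isLt; omega⟩) := by simp [bg, h]
  rw [e1, dot_cons, mul_zero, zero_add]

lemma bin_tail {N : ℕ} (bd : BinData N) (pv pv' hv hv' : ZMod 3)
    (w w' : Fin (bd.D+2) → ZMod 2)
    (htl : (fun i : Fin (bd.D+1) => w i.succ - w' i.succ) ≠ 0) :
    3 ≤ (univ.filter fun c : Fin N =>
      bval bd pv hv w c ≠ bval bd pv' hv' w' c).card := by
  classical
  set tl : Fin (bd.D+1) → ZMod 2 := fun i => w i.succ - w' i.succ with htldef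
  obtain ⟨b, hb0⟩ := (fun_ne_iff tl 0).mp htl
  have hb : tl b ≠ 0 := by simpa using hb0
  have h2D : 2 ^ (bd.D+1) = 2 * 2 ^ bd.D := by rw [pow_succ]; ring
  set FB := univ.filter (fun v : Fin (bd.D+1) → ZMod 2 => dot v tl = 0) with hFB
  have hFBcard : FB.card * 2 = 2 ^ (bd.D + 1) := by
    have hc := card_fiber_mul (dotHom tl) (surj_single tl b (z2_unit _ hb)) 0
    simp [ZMod.card] at hc; rw [hFB]; exact hc
  have hFBc : FB.card = 2 ^ bd.D := by omega
  have h0FB : (0 : Fin (bd.D+1) → ZMod 2) ∈ FB := by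
    simp [hFB, dot_zero_left]
  set O := univ.filter (fun i : Fin bd.nf => dot (bd.F i) tl = 0) with hO
  have hOcard : O.card ≤ 2 ^ bd.D - 1 := by
    have he : (FB.erase 0).card = 2 ^ bd.D - 1 := by
      rw [Finset.card_erase_of_mem h0FB, hFBc]
    rw [← he]
    refine Finset.card_le_card_of_injOn (f := fun i => bd.F i) ?_ ?_
    · intro i hi
      simp only [hO, Finset.mem_coe, mem_filter, mem_univ, true_and] at hi
      exact Finset.mem_erase.mpr ⟨bd.hF0 i, by simp [hFB, hi]⟩
    · intro i _ i' _ hii'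
      exact bd.F.injective hii'
  set G := univ.filter (fun i : Fin bd.nf => ¬ (dot (bd.F i) tl = 0)) with hG
  have hsplit : O.card + G.card = bd.nf := by
    rw [hO, hG]
    have := Finset.card_filter_add_card_filter_not
      (s := (univ : Finset (Fin bd.nf))) (p := fun i => dot (bd.F i) tl = 0)
    simpa using this
  have hGt : G.card ≤ (univ.filter fun c : Fin N =>
      bval bd pv hv w c ≠ bval bd pv' hv' w' c).card := by
    refine Finset.card_le_card_of_injOn
      (f := fun i : Fin bd.nf => (⟨8 + bd.xe + (i:ℕ), by
        have := bd.hN; have := i.isLt; omega⟩ : Fin N)) ?_ ?_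
    · intro i hi
      have hi1 := Finset.mem_coe.mp hi
      simp only [hG, mem_filter, mem_univ, true_and] at hi1
      simp only [Finset.mem_coe, mem_filter, mem_univ, true_and]
      rw [bval_ne_iff]
      set c : Fin N := ⟨8 + bd.xe + (i:ℕ), by have := bd.hN; have := i.isLt; omega⟩
      have hnc : ¬ (c:ℕ) < 8 + bd.xe := by simp [c]
      rw [filler_dot bd c hnc, off_ge8 _ _ _ (by simp [c]; omega),
        off_ge8 _ _ _ (by simp [c]; omega)]
      have hidx : (⟨(c:ℕ) - (8 + bd.xe), by have := bd.hN; have := c.isLt; omega⟩ :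
          Fin bd.nf) = i := by
        apply Fin.ext; simp [c]
      rw [hidx, sub_zero, add_zero, dot_comm]
      exact hi1
    · intro i _ i' _ hii'
      have := congrArg Fin.val hii'
      simp only at this
      exact Fin.ext (by omega)
  have hnf := bd.hnf
  have h8 : 8 ≤ 2 ^ bd.D := by
    calc (8:ℕ) = 2 ^ 3 := by norm_num
    _ ≤ 2 ^ bd.D := Nat.pow_le_pow_right (by norm_num) bd.hD
  obtain ⟨pd, hpd⟩ : ∃ n, 2 ^ bd.D = n := ⟨_, rfl⟩
  rw [hpd] at hOcard hnf h8
  obtain ⟨oc, hoc⟩ : ∃ n, O.card = n := ⟨_, rfl⟩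
  obtain ⟨gc, hgc⟩ : ∃ n, G.card = n := ⟨_, rfl⟩
  rw [hoc] at hsplit hOcard
  rw [hgc] at hsplit
  have hOlt : oc < pd := by omega
  have h3 : 3 ≤ G.card := by
    rw [hgc]
    clear hOcard
    omega
  exact le_trans h3 hGt

lemma dw_zero_fun {n : ℕ} (w w' : Fin (n+1) → ZMod 2) (h0 : w 0 - w' 0 = 0)
    (htl : (fun i : Fin n => w i.succ - w' i.succ) = 0) :
    (fun i => w i - w' i) = 0 := by
  funext i
  rcases Fin.eq_zero_or_eq_succ i with rfl | ⟨i0, rfl⟩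
  · simpa using h0
  · have := congrFun htl i0
    simpa using this

lemma ne_of_dwzero {n : ℕ} (w w' : Fin (n+1) → ZMod 2) (hw : w ≠ w')
    (htl : (fun i : Fin n => w i.succ - w' i.succ) = 0) :
    w 0 - w' 0 ≠ 0 := by
  intro h0
  apply hw
  funext i
  have := congrFun (dw_zero_fun w w' h0 htl) i
  simp only [Pi.zero_apply] at this
  have : w i - w' i = 0 := this
  rw [sub_eq_zero] at this
  exact this

lemma binD1 {N : ℕ} (bd : BinData N) (pv hv : ZMod 3)
    (w w' : Fin (bd.D+2) → ZMod 2) (hw : w ≠ w') :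
    3 ≤ (univ.filter fun c : Fin N =>
      bval bd pv hv w c ≠ bval bd pv hv w' c).card := by
  classical
  by_cases htl : (fun i : Fin (bd.D+1) => w i.succ - w' i.succ) = 0
  · have hdw0 := ne_of_dwzero w w' hw htl
    have hN8 : 8 ≤ N := by have := bd.hN; have := bd.hnf; omega
    have hmem : ∀ (m : ℕ) (hm : m < 8),
        (⟨m, by omega⟩ : Fin N) ∈ univ.filter (fun c : Fin N =>
          bval bd pv hv w c ≠ bval bd pv hv w' c) := by
      intro m hm
      simp only [mem_filter, mem_univ, true_and]
      rw [bval_ne_iff]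
      have hlt : ((⟨m, by omega⟩ : Fin N) : ℕ) < 8 + bd.xe := by simp; omega
      rw [struct_dot bd _ hlt _ htl, sub_self, add_zero]
      exact hdw0
    refine three_le_card (⟨0, by omega⟩ : Fin N) ⟨1, by omega⟩ ⟨2, by omega⟩
      (hmem 0 (by omega)) (hmem 1 (by omega)) (hmem 2 (by omega)) ?_ ?_ ?_ <;>
      simp [Fin.ext_iff]
  · exact bin_tail bd pv pv hv hv w w' htl

lemma binD2pi {N : ℕ} (bd : BinData N) (pv pv' hv hv' : ZMod 3)
    (w w' : Fin (bd.D+2) → ZMod 2) (hpv : pv ≠ pv') :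
    2 ≤ (univ.filter fun c : Fin N =>
      bval bd pv hv w c ≠ bval bd pv' hv' w' c).card := by
  classical
  have hN8 : 8 ≤ N := by have := bd.hN; have := bd.hnf; omega
  by_cases htl : (fun i : Fin (bd.D+1) => w i.succ - w' i.succ) = 0
  · by_cases hdw0 : w 0 - w' 0 = 0
    · -- all-zero difference, use payload offsets
      have hdz := dw_zero_fun w w' hdw0 htl
      obtain ⟨j1, hj1⟩ := EE_inj pv pv' hpv
      have hj1lt := j1.isLt
      have hmem : ∀ (σ : ℕ) (hσ : σ ≤ 1),
          (⟨2 + 2*(j1:ℕ) + σ, by omega⟩ : Fin N) ∈ univ.filter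
            (fun c : Fin N => bval bd pv hv w c ≠ bval bd pv' hv' w' c) := by
        intro σ hσ
        simp only [mem_filter, mem_univ, true_and]
        rw [bval_ne_iff, hdz, dot_zero_left, zero_add]
        have : ((⟨2 + 2*(j1:ℕ) + σ, by omega⟩ : Fin N) : ℕ) = 2 + 2*(j1:ℕ) + σ := rfl
        rw [this, off_pay pv hv j1 σ hσ, off_pay pv' hv' j1 σ hσ]
        exact sub_ne_zero.mpr hj1
      exact two_le_card _ _ (hmem 0 (by omega)) (hmem 1 (by omega))
        (by simp [Fin.ext_iff])
    · -- head nonzero, use a shared payload coordinate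
      obtain ⟨j0, hj0⟩ := EE_share pv pv'
      have hj0lt := j0.isLt
      have hmem : ∀ (σ : ℕ) (hσ : σ ≤ 1),
          (⟨2 + 2*(j0:ℕ) + σ, by omega⟩ : Fin N) ∈ univ.filter
            (fun c : Fin N => bval bd pv hv w c ≠ bval bd pv' hv' w' c) := by
        intro σ hσ
        simp only [mem_filter, mem_univ, true_and]
        rw [bval_ne_iff]
        have hlt : ((⟨2 + 2*(j0:ℕ) + σ, by omega⟩ : Fin N) : ℕ) < 8 + bd.xe := by
          simp; omega
        rw [struct_dot bd _ hlt _ htl]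
        have hcv : ((⟨2 + 2*(j0:ℕ) + σ, by omega⟩ : Fin N) : ℕ) = 2 + 2*(j0:ℕ) + σ := rfl
        rw [hcv, off_pay pv hv j0 σ hσ, off_pay pv' hv' j0 σ hσ, hj0, sub_self, add_zero]
        exact hdw0
      exact two_le_card _ _ (hmem 0 (by omega)) (hmem 1 (by omega))
        (by simp [Fin.ext_iff])
  · exact le_trans (by omega) (bin_tail bd pv pv' hv hv' w w' htl)

lemma binD2eta {N : ℕ} (bd : BinData N) (pv pv' hv hv' : ZMod 3)
    (w w' : Fin (bd.D+2) → ZMod 2) (hhv : hv ≠ hv') :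
    1 ≤ (univ.filter fun c : Fin N =>
      bval bd pv hv w c ≠ bval bd pv' hv' w' c).card := by
  classical
  have hN8 : 8 ≤ N := by have := bd.hN; have := bd.hnf; omega
  by_cases htl : (fun i : Fin (bd.D+1) => w i.succ - w' i.succ) = 0
  · by_cases hdw0 : w 0 - w' 0 = 0
    · have hdz := dw_zero_fun w w' hdw0 htl
      obtain ⟨j, hj⟩ := E2p_inj hv hv' hhv
      have hjlt := j.isLt
      refine one_le_card (⟨(j:ℕ), by omega⟩ : Fin N) ?_
      simp only [mem_filter, mem_univ, true_and]
      rw [bval_ne_iff, hdz, dot_zero_left, zero_add]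
      have hcv : ((⟨(j:ℕ), by omega⟩ : Fin N) : ℕ) = (j:ℕ) := rfl
      rw [hcv, off_eta pv hv j, off_eta pv' hv' j]
      exact sub_ne_zero.mpr hj
    · obtain ⟨j0, hj0⟩ := EE_share pv pv'
      have hj0lt := j0.isLt
      refine one_le_card (⟨2 + 2*(j0:ℕ), by omega⟩ : Fin N) ?_
      simp only [mem_filter, mem_univ, true_and]
      rw [bval_ne_iff]
      have hlt : ((⟨2 + 2*(j0:ℕ), by omega⟩ : Fin N) : ℕ) < 8 + bd.xe := by
        simp; omega
      rw [struct_dot bd _ hlt _ htl]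
      have hcv : ((⟨2 + 2*(j0:ℕ), by omega⟩ : Fin N) : ℕ) = 2 + 2*(j0:ℕ) + 0 := by simp
      rw [hcv, off_pay pv hv j0 0 (by omega), off_pay pv' hv' j0 0 (by omega),
        hj0, sub_self, add_zero]
      exact hdw0
  · exact le_trans (by omega) (bin_tail bd pv pv' hv hv' w w' htl)

section Counts

variable {t d : ℕ}

abbrev Gam (t : ℕ) := Fin t → ZMod 3
abbrev Wsp (d : ℕ) := Fin d → ZMod 2

lemma count_empty :
    ((univ : Finset (Gam t × Wsp d)).filter fun _ => True).card
      = Fintype.card (Gam t × Wsp d) := by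
  simp

lemma countT (u1 : Fin t → ZMod 3)
    (hs : Surjective (fun x : Gam t => dot x u1)) (y : ZMod 3) :
    ((univ : Finset (Gam t × Wsp d)).filter fun i => dot i.1 u1 = y).card * 3
      = Fintype.card (Gam t × Wsp d) := by
  classical
  rw [card_filter_prod]
  have hin : ∀ x : Gam t, ((univ : Finset (Wsp d)).filter
      fun _ => dot x u1 = y).card = if dot x u1 = y then Fintype.card (Wsp d) else 0 := by
    intro x
    split_ifs with h
    · simp [Finset.filter_true_of_mem, h]
    · simp [h]
  rw [Finset.sum_congr rfl fun x _ => hin x, ← Finset.sum_filter,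
    Finset.sum_const, smul_eq_mul]
  have hT := card_fiber_mul (dotHom u1) hs y
  simp only [dotHom_apply] at hT
  have hz3 : Fintype.card (ZMod 3) = 3 := by simp
  rw [hz3] at hT
  rw [Fintype.card_prod, mul_right_comm]
  congr 1

lemma countTT (u1 u2 : Fin t → ZMod 3)
    (hs : Surjective (fun x : Gam t => (dot x u1, dot x u2))) (y1 y2 : ZMod 3) :
    ((univ : Finset (Gam t × Wsp d)).filter
      fun i => dot i.1 u1 = y1 ∧ dot i.1 u2 = y2).card * 9
      = Fintype.card (Gam t × Wsp d) := by
  classical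
  rw [card_filter_prod]
  have hin : ∀ x : Gam t, ((univ : Finset (Wsp d)).filter
      fun _ => dot x u1 = y1 ∧ dot x u2 = y2).card
      = if dot x u1 = y1 ∧ dot x u2 = y2 then Fintype.card (Wsp d) else 0 := by
    intro x
    split_ifs with h
    · simp [Finset.filter_true_of_mem, h]
    · simp [h]
  rw [Finset.sum_congr rfl fun x _ => hin x, ← Finset.sum_filter,
    Finset.sum_const, smul_eq_mul]
  have hT := card_fiber_mul (pairHom u1 u2) hs (y1, y2)
  simp only [pairHom_apply, Prod.mk.injEq] at hT
  have hz9 : Fintype.card (ZMod 3 × ZMod 3) = 9 := by simp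
  rw [hz9] at hT
  rw [Fintype.card_prod, mul_right_comm, hT]

lemma countB (g : Fin d → ZMod 2)
    (hg : Surjective (fun w : Wsp d => dot w g))
    (o : Gam t → ZMod 2) (y : ZMod 2) :
    ((univ : Finset (Gam t × Wsp d)).filter
      fun i => dot i.2 g + o i.1 = y).card * 2
      = Fintype.card (Gam t × Wsp d) := by
  classical
  rw [card_filter_prod]
  have hz2 : Fintype.card (ZMod 2) = 2 := by simp
  have hin : ∀ x : Gam t, ((univ : Finset (Wsp d)).filter
      fun w => dot w g + o x = y).card * 2 = Fintype.card (Wsp d) := by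
    intro x
    have h1 : ∀ w : Wsp d, (dot w g + o x = y) ↔ (dot w g = y - o x) := by
      intro w; constructor
      · intro h; rw [← h]; ring
      · intro h; rw [h]; ring
    rw [Finset.filter_congr fun w _ => by rw [h1 w]]
    have hT := card_fiber_mul (dotHom g) hg (y - o x)
    simp only [dotHom_apply] at hT
    rw [hz2] at hT
    exact hT
  rw [Finset.sum_mul, Finset.sum_congr rfl fun x _ => hin x, Finset.sum_const,
    Finset.card_univ, smul_eq_mul, Fintype.card_prod]

lemma countBB (g g' : Fin d → ZMod 2)
    (hg : Surjective (fun w : Wsp d => (dot w g, dot w g')))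
    (o o' : Gam t → ZMod 2) (y1 y2 : ZMod 2) :
    ((univ : Finset (Gam t × Wsp d)).filter
      fun i => (dot i.2 g + o i.1 = y1 ∧ dot i.2 g' + o' i.1 = y2)).card * 4
      = Fintype.card (Gam t × Wsp d) := by
  classical
  rw [card_filter_prod]
  have hz4 : Fintype.card (ZMod 2 × ZMod 2) = 4 := by simp
  have hin : ∀ x : Gam t, ((univ : Finset (Wsp d)).filter
      fun w => dot w g + o x = y1 ∧ dot w g' + o' x = y2).card * 4
      = Fintype.card (Wsp d) := by
    intro x
    have h1 : ∀ w : Wsp d, (dot w g + o x = y1 ∧ dot w g' + o' x = y2)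
        ↔ (dot w g = y1 - o x ∧ dot w g' = y2 - o' x) := by
      intro w
      constructor
      · rintro ⟨ha, hb⟩; constructor
        · rw [← ha]; ring
        · rw [← hb]; ring
      · rintro ⟨ha, hb⟩; constructor
        · rw [ha]; ring
        · rw [hb]; ring
    rw [Finset.filter_congr fun w _ => by rw [h1 w]]
    have hT := card_fiber_mul (pairHom g g') hg (y1 - o x, y2 - o' x)
    simp only [pairHom_apply, Prod.mk.injEq] at hT
    rw [hz4] at hT
    exact hT
  rw [Finset.sum_mul, Finset.sum_congr rfl fun x _ => hin x, Finset.sum_const,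
    Finset.card_univ, smul_eq_mul, Fintype.card_prod]

lemma countTB (u1 : Fin t → ZMod 3)
    (hs : Surjective (fun x : Gam t => dot x u1))
    (g : Fin d → ZMod 2)
    (hg : Surjective (fun w : Wsp d => dot w g))
    (o : Gam t → ZMod 2) (y1 : ZMod 3) (y2 : ZMod 2) :
    ((univ : Finset (Gam t × Wsp d)).filter
      fun i => (dot i.1 u1 = y1 ∧ dot i.2 g + o i.1 = y2)).card * 6
      = Fintype.card (Gam t × Wsp d) := by
  classical
  rw [card_filter_prod]
  have hz2 : Fintype.card (ZMod 2) = 2 := by simp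
  have hbc : ∀ x : Gam t, ((univ : Finset (Wsp d)).filter
      fun w => dot w g + o x = y2).card * 2 = Fintype.card (Wsp d) := by
    intro x
    have h1 : ∀ w : Wsp d, (dot w g + o x = y2) ↔ (dot w g = y2 - o x) := by
      intro w; constructor
      · intro h; rw [← h]; ring
      · intro h; rw [h]; ring
    rw [Finset.filter_congr fun w _ => by rw [h1 w]]
    have hT := card_fiber_mul (dotHom g) hg (y2 - o x)
    simp only [dotHom_apply] at hT
    rw [hz2] at hT
    exact hT
  have hin : ∀ x : Gam t, ((univ : Finset (Wsp d)).filter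
      fun w => dot x u1 = y1 ∧ dot w g + o x = y2).card
      = if dot x u1 = y1 then ((univ : Finset (Wsp d)).filter
          fun w => dot w g + o x = y2).card else 0 := by
    intro x
    split_ifs with h
    · congr 1
      apply Finset.filter_congr
      intro w _
      simp [h]
    · have : ((univ : Finset (Wsp d)).filter
          fun w => dot x u1 = y1 ∧ dot w g + o x = y2) = ∅ := by
        apply Finset.filter_false_of_mem
        intro w _
        simp [h]
      rw [this, Finset.card_empty]
  have hT := card_fiber_mul (dotHom u1) hs y1
  simp only [dotHom_apply] at hT
  have hz3 : Fintype.card (ZMod 3) = 3 := by simp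
  rw [hz3] at hT
  have key : (∑ x : Gam t, ((univ : Finset (Wsp d)).filter
      fun w => dot x u1 = y1 ∧ dot w g + o x = y2).card) * 2
      = ((univ : Finset (Gam t)).filter fun x => dot x u1 = y1).card
        * Fintype.card (Wsp d) := by
    rw [Finset.sum_mul, Finset.sum_congr rfl fun x _ => by
      rw [hin x, ite_mul, zero_mul]]
    rw [← Finset.sum_filter, Finset.sum_congr rfl fun x hx => by
      rw [hbc x], Finset.sum_const, smul_eq_mul]
  calc (∑ x : Gam t, ((univ : Finset (Wsp d)).filter
      fun w => dot x u1 = y1 ∧ dot w g + o x = y2).card) * 6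
      = ((∑ x : Gam t, ((univ : Finset (Wsp d)).filter
          fun w => dot x u1 = y1 ∧ dot w g + o x = y2).card) * 2) * 3 := by ring
  _ = (((univ : Finset (Gam t)).filter fun x => dot x u1 = y1).card
        * Fintype.card (Wsp d)) * 3 := by rw [key]
  _ = (((univ : Finset (Gam t)).filter fun x => dot x u1 = y1).card * 3)
        * Fintype.card (Wsp d) := by ring
  _ = Fintype.card (Gam t) * Fintype.card (Wsp d) := by congr 1
  _ = Fintype.card (Gam t × Wsp d) := (Fintype.card_prod _ _).symm

end Counts


lemma tern_exists (M : ℕ) (hM : 1 ≤ M) : Nonempty (TernData M) := by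
  by_cases h6 : 6 ≤ M
  · exact tern_big M h6
  · interval_cases M
    · exact ⟨td1⟩
    · exact ⟨td2⟩
    · exact ⟨td3⟩
    · exact ⟨td4⟩
    · exact ⟨td5⟩

def Arr {M N : ℕ} (td : TernData M) (bd : BinData N)
    (i : (Fin td.t → ZMod 3) × (Fin (bd.D+2) → ZMod 2))
    (c : Fin M ⊕ Fin N) : ℕ :=
  Sum.elim (fun j => (dot i.1 (td.u j)).val)
    (fun c => (bval bd (td.pr i.1) (td.et i.1) i.2 c).val) c

@[simp] lemma Arr_inl {M N : ℕ} (td : TernData M) (bd : BinData N) (i) (j : Fin M) :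
    Arr td bd i (Sum.inl j) = (dot i.1 (td.u j)).val := rfl

@[simp] lemma Arr_inr {M N : ℕ} (td : TernData M) (bd : BinData N) (i) (c : Fin N) :
    Arr td bd i (Sum.inr c) = (bval bd (td.pr i.1) (td.et i.1) i.2 c).val := rfl

lemma finset_le_two {α : Type*} [DecidableEq α] (S : Finset α) (hS : S.card ≤ 2) :
    S = ∅ ∨ (∃ c, S = {c}) ∨ ∃ c1 c2, c1 ≠ c2 ∧ S = {c1, c2} := by
  rcases Nat.lt_or_ge S.card 1 with h | h
  · exact Or.inl (Finset.card_eq_zero.mp (by omega))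
  rcases Nat.lt_or_ge S.card 2 with h2 | h2
  · exact Or.inr (Or.inl (Finset.card_eq_one.mp (by omega)))
  have : S.card = 2 := by omega
  obtain ⟨c1, c2, hne, rfl⟩ := Finset.card_eq_two.mp this
  exact Or.inr (Or.inr ⟨c1, c2, hne, rfl⟩)

lemma IsIrMOA_equiv {ι' ι κ : Type*} [Fintype ι'] [Fintype ι] [Fintype κ]
    [DecidableEq κ] (e : ι' ≃ ι) (A : ι → κ → ℕ) (lv : κ → ℕ) (k : ℕ)
    (h : IsIrMOA A lv k) : IsIrMOA (fun i c => A (e i) c) lv k := by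
  classical
  obtain ⟨⟨hlt, hcnt⟩, hd⟩ := h
  refine ⟨⟨fun i j => hlt (e i) j, ?_⟩, ?_⟩
  · intro S hS x hx
    have hcard : (Finset.univ.filter fun i : ι' => ∀ j ∈ S, A (e i) j = x j).card
        = (Finset.univ.filter fun i : ι => ∀ j ∈ S, A i j = x j).card := by
      apply Finset.card_bij (fun i _ => e i)
      · intro a ha
        simp only [Finset.mem_filter, Finset.mem_univ, true_and] at ha ⊢
        exact ha
      · intro a _ b _ hab; exact e.injective hab
      · intro b hb
        simp only [Finset.mem_filter, Finset.mem_univ, true_and] at hb ⊢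
        exact ⟨e.symm b, by simpa using hb, by simp⟩
    rw [show Fintype.card ι' = Fintype.card ι from Fintype.card_congr e, hcard]
    exact hcnt S hS x hx
  · intro i i' hne
    have heq : hamDist (fun i c => A (e i) c) i i' = hamDist A (e i) (e i') := rfl
    rw [heq]
    exact hd _ _ (fun hc => hne (e.injective hc))

lemma main_moa {M N : ℕ} (td : TernData M) (bd : BinData N) :
    IsMOA (Arr td bd) (Sum.elim (fun _ => 3) fun _ => 2) 2 := by
  classical
  constructor
  · rintro i (j|c)
    · show (dot i.1 (td.u j)).val < 3
      exact ZMod.val_lt _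
    · show (bval bd (td.pr i.1) (td.et i.1) i.2 c).val < 2
      exact ZMod.val_lt _
  · intro S hS x hx
    rcases finset_le_two S hS with rfl | ⟨c1, rfl⟩ | ⟨c1, c2, hcc, rfl⟩
    · rw [Finset.prod_empty, mul_one]
      have he : (Finset.univ.filter fun i : (Fin td.t → ZMod 3) × (Fin (bd.D+2) → ZMod 2)
          => ∀ j ∈ (∅ : Finset (Fin M ⊕ Fin N)), Arr td bd i j = x j) = Finset.univ := by
        apply Finset.filter_true_of_mem
        intro i _ j hj
        exact absurd hj (by simp)
      rw [he, Finset.card_univ]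
    · rw [Finset.prod_singleton]
      have he : (Finset.univ.filter fun i : (Fin td.t → ZMod 3) × (Fin (bd.D+2) → ZMod 2)
          => ∀ j ∈ ({c1} : Finset (Fin M ⊕ Fin N)), Arr td bd i j = x j)
          = Finset.univ.filter fun i => Arr td bd i c1 = x c1 := by
        apply Finset.filter_congr
        intro i _
        simp
      rw [he]
      have hxc1 : x c1 < Sum.elim (fun _ => 3) (fun _ => 2) c1 := hx c1 (by simp)
      cases c1 with
      | inl j =>
        have hb1 : x (Sum.inl j) < 3 := hxc1
        have hconv : (Finset.univ.filter fun i : (Fin td.t → ZMod 3) × (Fin (bd.D+2) → ZMod 2)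
            => Arr td bd i (Sum.inl j) = x (Sum.inl j))
            = Finset.univ.filter fun i => dot i.1 (td.u j) = ((x (Sum.inl j) : ℕ) : ZMod 3) := by
          apply Finset.filter_congr
          intro i _
          rw [Arr_inl]
          exact val_eq_iff _ _ hb1
        rw [hconv]
        obtain ⟨b, hb⟩ := td.hsingle j
        exact countT (td.u j) (surj_single _ b (z3_unit _ hb)) _
      | inr c =>
        have hb1 : x (Sum.inr c) < 2 := hxc1
        have hconv : (Finset.univ.filter fun i : (Fin td.t → ZMod 3) × (Fin (bd.D+2) → ZMod 2)
            => Arr td bd i (Sum.inr c) = x (Sum.inr c))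
            = Finset.univ.filter fun i =>
              dot i.2 (bg bd c) + off (td.pr i.1) (td.et i.1) (c:ℕ) = ((x (Sum.inr c) : ℕ) : ZMod 2) := by
          apply Finset.filter_congr
          intro i _
          rw [Arr_inr]
          exact val_eq_iff _ _ hb1
        rw [hconv]
        exact countB (bg bd c) (bg_single_surj bd c)
          (fun γ => off (td.pr γ) (td.et γ) (c:ℕ)) _
    · rw [Finset.prod_pair hcc]
      have he : (Finset.univ.filter fun i : (Fin td.t → ZMod 3) × (Fin (bd.D+2) → ZMod 2)
          => ∀ j ∈ ({c1, c2} : Finset (Fin M ⊕ Fin N)), Arr td bd i j = x j)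
          = Finset.univ.filter fun i => Arr td bd i c1 = x c1 ∧ Arr td bd i c2 = x c2 := by
        apply Finset.filter_congr
        intro i _
        simp
      rw [he]
      have hx1 : x c1 < Sum.elim (fun _ => 3) (fun _ => 2) c1 := hx c1 (by simp)
      have hx2 : x c2 < Sum.elim (fun _ => 3) (fun _ => 2) c2 := hx c2 (by simp)
      cases c1 with
      | inl j =>
        cases c2 with
        | inl j' =>
          have hjj' : j ≠ j' := fun hc => hcc (by rw [hc])
          have hb1 : x (Sum.inl j) < 3 := hx1
          have hb2 : x (Sum.inl j') < 3 := hx2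
          have hconv : (Finset.univ.filter fun i : (Fin td.t → ZMod 3) × (Fin (bd.D+2) → ZMod 2)
              => Arr td bd i (Sum.inl j) = x (Sum.inl j) ∧ Arr td bd i (Sum.inl j') = x (Sum.inl j'))
              = Finset.univ.filter fun i =>
                dot i.1 (td.u j) = ((x (Sum.inl j) : ℕ) : ZMod 3)
                ∧ dot i.1 (td.u j') = ((x (Sum.inl j') : ℕ) : ZMod 3) := by
            apply Finset.filter_congr
            intro i _
            rw [Arr_inl, Arr_inl]
            exact and_congr (val_eq_iff _ _ hb1) (val_eq_iff _ _ hb2)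
          rw [hconv]
          obtain ⟨b, b', hbb⟩ := td.hpair j j' hjj'
          exact countTT (td.u j) (td.u j') (surj_pair _ _ b b' (z3_unit _ hbb)) _ _
        | inr c =>
          have hb1 : x (Sum.inl j) < 3 := hx1
          have hb2 : x (Sum.inr c) < 2 := hx2
          have hconv : (Finset.univ.filter fun i : (Fin td.t → ZMod 3) × (Fin (bd.D+2) → ZMod 2)
              => Arr td bd i (Sum.inl j) = x (Sum.inl j) ∧ Arr td bd i (Sum.inr c) = x (Sum.inr c))
              = Finset.univ.filter fun i =>
                dot i.1 (td.u j) = ((x (Sum.inl j) : ℕ) : ZMod 3)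
                ∧ dot i.2 (bg bd c) + off (td.pr i.1) (td.et i.1) (c:ℕ)
                  = ((x (Sum.inr c) : ℕ) : ZMod 2) := by
            apply Finset.filter_congr
            intro i _
            rw [Arr_inl, Arr_inr]
            exact and_congr (val_eq_iff _ _ hb1) (val_eq_iff _ _ hb2)
          rw [hconv]
          obtain ⟨b, hb⟩ := td.hsingle j
          exact countTB (td.u j) (surj_single _ b (z3_unit _ hb)) (bg bd c)
            (bg_single_surj bd c) (fun γ => off (td.pr γ) (td.et γ) (c:ℕ)) _ _
      | inr c =>
        cases c2 with
        | inl j =>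
          have hb1 : x (Sum.inr c) < 2 := hx1
          have hb2 : x (Sum.inl j) < 3 := hx2
          have hconv : (Finset.univ.filter fun i : (Fin td.t → ZMod 3) × (Fin (bd.D+2) → ZMod 2)
              => Arr td bd i (Sum.inr c) = x (Sum.inr c) ∧ Arr td bd i (Sum.inl j) = x (Sum.inl j))
              = Finset.univ.filter fun i =>
                dot i.1 (td.u j) = ((x (Sum.inl j) : ℕ) : ZMod 3)
                ∧ dot i.2 (bg bd c) + off (td.pr i.1) (td.et i.1) (c:ℕ)
                  = ((x (Sum.inr c) : ℕ) : ZMod 2) := by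
            apply Finset.filter_congr
            intro i _
            rw [Arr_inl, Arr_inr]
            rw [and_comm]
            exact and_congr (val_eq_iff _ _ hb2) (val_eq_iff _ _ hb1)
          rw [hconv]
          obtain ⟨b, hb⟩ := td.hsingle j
          have := countTB (td.u j) (surj_single _ b (z3_unit _ hb)) (bg bd c)
            (bg_single_surj bd c) (fun γ => off (td.pr γ) (td.et γ) (c:ℕ))
            ((x (Sum.inl j) : ℕ) : ZMod 3) ((x (Sum.inr c) : ℕ) : ZMod 2)
          calc _ = _ * 6 := by norm_num
          _ = _ := this
        | inr c' =>
          have hcc' : c ≠ c' := fun hc => hcc (by rw [hc])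
          have hb1 : x (Sum.inr c) < 2 := hx1
          have hb2 : x (Sum.inr c') < 2 := hx2
          have hconv : (Finset.univ.filter fun i : (Fin td.t → ZMod 3) × (Fin (bd.D+2) → ZMod 2)
              => Arr td bd i (Sum.inr c) = x (Sum.inr c) ∧ Arr td bd i (Sum.inr c') = x (Sum.inr c'))
              = Finset.univ.filter fun i =>
                dot i.2 (bg bd c) + off (td.pr i.1) (td.et i.1) (c:ℕ)
                  = ((x (Sum.inr c) : ℕ) : ZMod 2)
                ∧ dot i.2 (bg bd c') + off (td.pr i.1) (td.et i.1) (c':ℕ)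
                  = ((x (Sum.inr c') : ℕ) : ZMod 2) := by
            apply Finset.filter_congr
            intro i _
            rw [Arr_inr, Arr_inr]
            exact and_congr (val_eq_iff _ _ hb1) (val_eq_iff _ _ hb2)
          rw [hconv]
          exact countBB (bg bd c) (bg bd c') (bg_pair_surj bd c c' hcc')
            (fun γ => off (td.pr γ) (td.et γ) (c:ℕ))
            (fun γ => off (td.pr γ) (td.et γ) (c':ℕ)) _ _

lemma main_dist {M N : ℕ} (td : TernData M) (bd : BinData N) :
    ∀ i i', i ≠ i' → 3 ≤ hamDist (Arr td bd) i i' := by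
  classical
  rintro ⟨x, w⟩ ⟨x', w'⟩ hne
  show 3 ≤ (Finset.univ.filter fun col => Arr td bd (x, w) col ≠ Arr td bd (x', w') col).card
  have hterncong : (Finset.univ.filter fun j : Fin M =>
      Arr td bd (x,w) (Sum.inl j) ≠ Arr td bd (x',w') (Sum.inl j))
      = Finset.univ.filter fun j => dot x (td.u j) ≠ dot x' (td.u j) := by
    apply Finset.filter_congr
    intro j _
    rw [Arr_inl, Arr_inl]
    exact val_ne_iff _ _
  have hbincong : (Finset.univ.filter fun c : Fin N =>
      Arr td bd (x,w) (Sum.inr c) ≠ Arr td bd (x',w') (Sum.inr c))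
      = Finset.univ.filter fun c => bval bd (td.pr x) (td.et x) w c
          ≠ bval bd (td.pr x') (td.et x') w' c := by
    apply Finset.filter_congr
    intro c _
    rw [Arr_inr, Arr_inr]
    exact val_ne_iff _ _
  by_cases hx : x = x'
  · subst hx
    have hw : w ≠ w' := by
      intro hc; exact hne (by rw [hc])
    have hbin := binD1 bd (td.pr x) (td.et x) w w' hw
    have h := card_sum_filter_ge (fun col : Fin M ⊕ Fin N =>
        Arr td bd (x, w) col ≠ Arr td bd (x, w') col) 0 3 (Nat.zero_le _)
        (by rw [hbincong]; exact hbin)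
    simpa using h
  · rcases td.hdist x x' hx with ⟨hp, h1⟩ | ⟨hp, h2⟩ | h3
    · have h := card_sum_filter_ge (fun col : Fin M ⊕ Fin N =>
          Arr td bd (x, w) col ≠ Arr td bd (x', w') col) 1 2
          (by rw [hterncong]; exact h1)
          (by rw [hbincong]; exact binD2pi bd _ _ _ _ w w' hp)
      simpa using h
    · have h := card_sum_filter_ge (fun col : Fin M ⊕ Fin N =>
          Arr td bd (x, w) col ≠ Arr td bd (x', w') col) 2 1
          (by rw [hterncong]; exact h2)
          (by rw [hbincong]; exact binD2eta bd _ _ _ _ w w' hp)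
      simpa using h
    · have h := card_sum_filter_ge (fun col : Fin M ⊕ Fin N =>
          Arr td bd (x, w) col ≠ Arr td bd (x', w') col) 3 0
          (by rw [hterncong]; exact h3) (Nat.zero_le _)
      simpa using h

end S5

/-- For every `m ≥ 2`, every `M` with `1 ≤ M ≤ 3·2^m`, and
every `N ≥ 9·2^{m−1} + 3`, there exist `r > 0` and an irredundant mixed
orthogonal array `IrMOA(r, M+N, 3^M2^N, 2)`. -/
theorem statement5 (m M N : ℕ) (hm : 2 ≤ m) (hM1 : 1 ≤ M)
    (hMa : M ≤ 3 * 2 ^ m) (hN : 9 * 2 ^ (m - 1) + 3 ≤ N) :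
    ∃ (r : ℕ) (C : Fin r → (Fin M ⊕ Fin N) → ℕ),
      0 < r ∧ IsIrMOA C (Sum.elim (fun _ => 3) fun _ => 2) 2 := by
  classical
  have hN21 : 21 ≤ N := by
    have h2 : 2 ≤ 2 ^ (m - 1) := by
      calc (2:ℕ) = 2 ^ 1 := by norm_num
      _ ≤ 2 ^ (m - 1) := Nat.pow_le_pow_right (by norm_num) (by omega)
    omega
  obtain ⟨td⟩ := S5.tern_exists M hM1
  obtain ⟨bd⟩ := S5.bin_exists N hN21
  refine ⟨Fintype.card ((Fin td.t → ZMod 3) × (Fin (bd.D+2) → ZMod 2)),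
    fun i c => S5.Arr td bd ((Fintype.equivFin _).symm i) c, Fintype.card_pos, ?_⟩
  exact S5.IsIrMOA_equiv ((Fintype.equivFin _).symm) (S5.Arr td bd) _ 2
    ⟨S5.main_moa td bd, S5.main_dist td bd⟩
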